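/- Let H be a complex Hilbert space, A a densely defined self-adjoint operator on H, Ω ∈ H, and 𝔖 a norm-closed linear subspace of B(H) such that XΩ ∈ D(A) for every X ∈ 𝔖. Then the linear map Φ : 𝔖 → H, Φ(X) = A(XΩ), is automatically bounded: there exists C > 0 with ‖A(XΩ)‖ ≤ C‖X‖ for all X ∈ 𝔖. -/

import Mathlib

open scoped ComplexConjugate InnerProductSpace

/-- If `𝔖 ⊆ B(H)` is a norm-closed linear subspace such that `XΩ ∈ D(A)` for every `X ∈ 𝔖`,
where `A` is a densely defined self-adjoint operator on `H`, then the map `Φ : X ↦ A(XΩ)`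
is automatically bounded: `‖A(XΩ)‖ ≤ C‖X‖` for some `C > 0` and all `X ∈ 𝔖`. -/
theorem phi_automatically_bounded_of_normClosed
    {H : Type*} [NormedAddCommGroup H] [InnerProductSpace ℂ H] [CompleteSpace H]
    (A : H →ₗ.[ℂ] H) (hA : IsSelfAdjoint A) (hdense : Dense (A.domain : Set H))
    (Ω : H) (𝔖 : Submodule ℂ (H →L[ℂ] H)) (hclosed : IsClosed (𝔖 : Set (H →L[ℂ] H)))
    (hdom : ∀ X ∈ 𝔖, X Ω ∈ A.domain) :
    ∃ C : ℝ, 0 < C ∧ ∀ X : H →L[ℂ] H, ∀ hX : X ∈ 𝔖, ‖A ⟨X Ω, hdom X hX⟩‖ ≤ C * ‖X‖ := by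
  -- A is symmetric on its domain
  rw [LinearPMap.isSelfAdjoint_def] at hA
  have hfa := LinearPMap.adjoint_isFormalAdjoint hdense
  rw [hA] at hfa
  -- the linear map Φ : 𝔖 → H
  let g : 𝔖 →ₗ[ℂ] H :=
    { toFun := fun X => A ⟨X.1 Ω, hdom X.1 X.2⟩
      map_add' := by
        intro X Y
        have h : (⟨(X + Y : 𝔖).1 Ω, hdom _ (X + Y).2⟩ : A.domain)
            = ⟨X.1 Ω, hdom X.1 X.2⟩ + ⟨Y.1 Ω, hdom Y.1 Y.2⟩ := by
          ext; simp
        show A _ = A _ + A _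
        rw [h, A.map_add]
      map_smul' := by
        intro c X
        have h : (⟨(c • X : 𝔖).1 Ω, hdom _ (c • X).2⟩ : A.domain)
            = c • ⟨X.1 Ω, hdom X.1 X.2⟩ := by
          ext; simp
        show A _ = c • A _
        rw [h, A.map_smul] }
  have : CompleteSpace 𝔖 := hclosed.completeSpace_coe
  have hg : Continuous g := by
    refine LinearMap.continuous_of_seq_closed_graph g ?_
    intro u x y hu hgu
    refine hdense.eq_of_inner_left ℂ fun w hw => ?_
    obtain ⟨v, rfl⟩ : ∃ v : A.domain, (v : H) = w := ⟨⟨w, hw⟩, rfl⟩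
    have h1 : Filter.Tendsto (fun n => ⟪g (u n), (v : H)⟫_ℂ) Filter.atTop
        (nhds ⟪y, (v : H)⟫_ℂ) :=
      (Filter.Tendsto.inner hgu tendsto_const_nhds)
    have h2 : Filter.Tendsto (fun n => ⟪(u n).1 Ω, A v⟫_ℂ) Filter.atTop
        (nhds ⟪x.1 Ω, A v⟫_ℂ) := by
      have hx : Filter.Tendsto (fun n => (u n).1 Ω) Filter.atTop (nhds (x.1 Ω)) := by
        have hcont : Continuous fun X : 𝔖 => X.1 Ω :=
          (ContinuousLinearMap.apply ℂ H Ω).continuous.comp continuous_subtype_val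
        exact (hcont.tendsto x).comp hu
      exact Filter.Tendsto.inner hx tendsto_const_nhds
    have heq : (fun n => ⟪g (u n), (v : H)⟫_ℂ) = fun n => ⟪(u n).1 Ω, A v⟫_ℂ := by
      funext n
      exact hfa ⟨(u n).1 Ω, hdom _ (u n).2⟩ v
    rw [heq] at h1
    have hy : ⟪y, (v : H)⟫_ℂ = ⟪x.1 Ω, A v⟫_ℂ := tendsto_nhds_unique h1 h2
    rw [hy]
    exact (hfa ⟨x.1 Ω, hdom _ x.2⟩ v).symm
  let G : 𝔖 →L[ℂ] H := ⟨g, hg⟩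
  refine ⟨‖G‖ + 1, by positivity, fun X hX => ?_⟩
  calc ‖A ⟨X Ω, hdom X hX⟩‖ = ‖G ⟨X, hX⟩‖ := rfl
    _ ≤ ‖G‖ * ‖(⟨X, hX⟩ : 𝔖)‖ := G.le_opNorm _
    _ ≤ (‖G‖ + 1) * ‖X‖ := by
        have : ‖(⟨X, hX⟩ : 𝔖)‖ = ‖X‖ := rfl
        rw [this]
        exact mul_le_mul_of_nonneg_right (by linarith [norm_nonneg G]) (norm_nonneg X)
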